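/- For λ ∈ (-1,1), every real symmetric 4×4 matrix Θ satisfying H(λ)ᵀΘ = ΘH(λ), where H(λ) is the 4×4 discrete square-well Hamiltonian, has the four-parameter form Θ₁₁=Θ₄₄=a, Θ₁₂=Θ₃₄=b, Θ₁₃=Θ₂₄=c, Θ₁₄=d, Θ₂₂=Θ₃₃=(c+a(1+λ))/(1-λ), Θ₂₃=(b+d(1+λ))/(1-λ), and Θ symmetric; conversely all such matrices satisfy the relation. -/

import Mathlib

open Matrix Polynomial

/-- The N×N discrete PT-symmetric square-well Hamiltonian (0-indexed). -/
noncomputable def Ham (N : ℕ) (l : ℝ) : Matrix (Fin N) (Fin N) ℝ :=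
  Matrix.of fun i j =>
    if (i : ℕ) = j then 2
    else if (j : ℕ) = (i : ℕ) + 1 then
      (if (i : ℕ) = 0 then -1 - l else if (j : ℕ) = N - 1 then -1 + l else -1)
    else if (i : ℕ) = (j : ℕ) + 1 then
      (if (j : ℕ) = 0 then -1 + l else if (i : ℕ) = N - 1 then -1 - l else -1)
    else 0

lemma Ham4 (l : ℝ) : Ham 4 l =
    !![2, -1 - l, 0, 0; -1 + l, 2, -1, 0; 0, -1, 2, -1 + l; 0, 0, -1 - l, 2] := by
  ext i j
  fin_cases i <;> fin_cases j <;> norm_num [Ham]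

set_option maxHeartbeats 1000000 in
theorem stmt11 (l : ℝ) (hl : l ∈ Set.Ioo (-1 : ℝ) 1) (Θ : Matrix (Fin 4) (Fin 4) ℝ) :
    (Θ.IsSymm ∧ (Ham 4 l)ᵀ * Θ = Θ * Ham 4 l) ↔
    ∃ a b c d : ℝ,
      Θ = !![a, b, c, d;
             b, (c + a * (1 + l)) / (1 - l), (b + d * (1 + l)) / (1 - l), c;
             c, (b + d * (1 + l)) / (1 - l), (c + a * (1 + l)) / (1 - l), b;
             d, c, b, a] := by
  have h1l : (1 : ℝ) - l ≠ 0 := by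
    have := hl.2; intro h; linarith
  rw [Ham4]
  constructor
  · rintro ⟨hs, heq⟩
    have hT : (!![2, -1 - l, 0, 0; -1 + l, 2, -1, 0; 0, -1, 2, -1 + l; 0, 0, -1 - l, 2] : Matrix (Fin 4) (Fin 4) ℝ)ᵀ = !![2, -1 + l, 0, 0; -1 - l, 2, -1, 0; 0, -1, 2, -1 - l; 0, 0, -1 + l, 2] := by
      ext i j; fin_cases i <;> fin_cases j <;> rfl
    rw [hT] at heq
    have hsym : ∀ i j, Θ j i = Θ i j := fun i j => congrFun (congrFun hs i) j
    refine ⟨Θ 0 0, Θ 0 1, Θ 0 2, Θ 0 3, ?_⟩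
    have E : ∀ i j, ((!![2, -1 + l, 0, 0; -1 - l, 2, -1, 0; 0, -1, 2, -1 - l; 0, 0, -1 + l, 2] : Matrix (Fin 4) (Fin 4) ℝ) * Θ) i j = (Θ * !![2, -1 - l, 0, 0; -1 + l, 2, -1, 0; 0, -1, 2, -1 + l; 0, 0, -1 - l, 2]) i j :=
      fun i j => congrFun (congrFun heq i) j
    have e01 := E 0 1; have e02 := E 0 2; have e03 := E 0 3
    have e12 := E 1 2; have e13 := E 1 3; have e23 := E 2 3
    simp [Matrix.mul_apply, Fin.sum_univ_four, Matrix.cons_val_zero, Matrix.cons_val_one] at e01 e02 e03 e12 e13 e23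
    have h10 := hsym 0 1; have h20 := hsym 0 2; have h30 := hsym 0 3
    have h21 := hsym 1 2; have h31 := hsym 1 3; have h32 := hsym 2 3
    have t13 : Θ 1 3 = Θ 0 2 := by
      have h : (l - 1) * Θ 1 3 = (l - 1) * Θ 0 2 := by linarith [e03]
      have := mul_left_cancel₀ (show (l:ℝ) - 1 ≠ 0 by intro h'; apply h1l; linarith) h
      linarith
    have t11 : Θ 1 1 = (Θ 0 2 + Θ 0 0 * (1 + l)) / (1 - l) := by
      rw [eq_div_iff h1l]; linarith [e01]
    have t12 : Θ 1 2 = (Θ 0 1 + Θ 0 3 * (1 + l)) / (1 - l) := by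
      rw [eq_div_iff h1l]; linarith [e02]
    have t23 : Θ 2 3 = Θ 0 1 := by nlinarith [e13, t12, t13, mul_div_cancel₀ (Θ 0 1 + Θ 0 3 * (1 + l)) h1l]
    have t22 : Θ 2 2 = Θ 1 1 := by linarith [e12, t13, h21]
    have t33 : Θ 3 3 = Θ 0 0 := by
      have h1l' : (1 : ℝ) + l ≠ 0 := by have := hl.1; intro h; linarith
      have key : Θ 2 2 * (1 - l) = Θ 0 2 + Θ 0 0 * (1 + l) := by
        rw [t22, t11, div_mul_cancel₀ _ h1l]
      have h : (1 + l) * Θ 3 3 = (1 + l) * Θ 0 0 := by linarith [e23, key, t13]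
      exact mul_left_cancel₀ h1l' h
    clear heq E hs hT
    ext i j
    fin_cases i <;> fin_cases j <;>
      simp <;>
      linarith [t11, t12, t13, t22, t23, t33, h10, h20, h30, h21, h31, h32]
  · rintro ⟨a, b, c, d, rfl⟩
    refine ⟨?_, ?_⟩
    · show _ᵀ = _
      ext i j
      fin_cases i <;> fin_cases j <;> rfl
    · rw [show (!![2, -1 - l, 0, 0; -1 + l, 2, -1, 0; 0, -1, 2, -1 + l; 0, 0, -1 - l, 2] : Matrix (Fin 4) (Fin 4) ℝ)ᵀ = !![2, -1 + l, 0, 0; -1 - l, 2, -1, 0; 0, -1, 2, -1 - l; 0, 0, -1 + l, 2] from by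
        ext i j; fin_cases i <;> fin_cases j <;> rfl]
      ext i j
      fin_cases i <;> fin_cases j <;>
        · simp only [Matrix.mul_apply, Fin.sum_univ_four, Matrix.cons_val',
            Matrix.cons_val_zero, Matrix.cons_val_one, Matrix.head_cons, Matrix.empty_val',
            Matrix.cons_val_fin_one, Matrix.head_fin_const, Matrix.cons_val_two,
            Matrix.tail_cons, Matrix.cons_val_three, Fin.isValue, Matrix.vecHead,
            Matrix.vecTail, Function.comp_apply, Matrix.of_apply, Fin.zero_eta, Fin.mk_one,
            Fin.succ_zero_eq_one, Fin.succ_one_eq_two, Fin.reduceFinMk]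
          field_simp [Matrix.vecHead, Matrix.vecTail] <;>
          ring
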